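/- Under Assumption A, there exists a constant Q > 0 such that the kernel k(t) = t^{α(t)-1}/Γ(α(t)) satisfies |k(t)| ≤ Q for all t ∈ (0,T]. -/
import Mathlib


theorem stmt2 (T Q₀ αstar : ℝ) (hT : 0 < T) (hQ₀ : 0 < Q₀) (hαstar : 0 < αstar)
    (α α' α'' : ℝ → ℝ)
    (hα : ∀ t ∈ Set.Icc (0:ℝ) T, HasDerivAt α (α' t) t)
    (hα' : ∀ t ∈ Set.Icc (0:ℝ) T, HasDerivAt α' (α'' t) t)
    (hrange : ∀ t ∈ Set.Icc (0:ℝ) T, αstar ≤ α t ∧ α t ≤ 1)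
    (h0 : α 0 = 1)
    (hbound : ∀ t ∈ Set.Icc (0:ℝ) T, |α' t| ≤ Q₀ ∧ |α'' t| ≤ Q₀) :
    ∃ Q > 0, ∀ t ∈ Set.Ioc (0:ℝ) T,
      |t ^ (α t - 1) / Real.Gamma (α t)| ≤ Q := by
  have h0mem : (0:ℝ) ∈ Set.Icc (0:ℝ) T := ⟨le_refl 0, hT.le⟩
  have hαs1 : αstar ≤ 1 := h0 ▸ (hrange 0 h0mem).1
  -- minimum of Gamma on [αstar, 1]
  obtain ⟨x₀, hx₀mem, hx₀⟩ := (isCompact_Icc (a := αstar) (b := 1)).exists_isMinOn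
    (Set.nonempty_Icc.2 hαs1)
    (by
      intro x hx
      have hxpos : 0 < x := lt_of_lt_of_le hαstar hx.1
      exact (Real.differentiableAt_Gamma (fun n hn => by
        have : (0:ℝ) < -(n:ℝ) := hn ▸ hxpos
        have : (0:ℝ) ≤ (n:ℝ) := Nat.cast_nonneg n
        linarith)).continuousAt.continuousWithinAt)
  have hmpos : 0 < Real.Gamma x₀ :=
    Real.Gamma_pos_of_pos (lt_of_lt_of_le hαstar hx₀mem.1)
  refine ⟨Real.exp Q₀ / Real.Gamma x₀, by positivity, ?_⟩
  intro t ht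
  have htmem : t ∈ Set.Icc (0:ℝ) T := ⟨ht.1.le, ht.2⟩
  have htpos : 0 < t := ht.1
  -- mean value inequality : |α t - 1| ≤ Q₀ * t
  have hmvt : |α t - 1| ≤ Q₀ * t := by
    have := Convex.norm_image_sub_le_of_norm_hasDerivWithin_le
      (f := α) (f' := α') (C := Q₀) (s := Set.Icc (0:ℝ) T)
      (fun x hx => (hα x hx).hasDerivWithinAt)
      (fun x hx => by simpa using (hbound x hx).1)
      (convex_Icc 0 T) h0mem htmem
    simpa [h0, Real.norm_eq_abs, abs_of_pos htpos] using this
  have hGpos : 0 < Real.Gamma (α t) :=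
    Real.Gamma_pos_of_pos (lt_of_lt_of_le hαstar (hrange t htmem).1)
  have hGlb : Real.Gamma x₀ ≤ Real.Gamma (α t) :=
    hx₀ ⟨(hrange t htmem).1, (hrange t htmem).2⟩
  -- bound the power
  have hpow : t ^ (α t - 1) ≤ Real.exp Q₀ := by
    rw [Real.rpow_def_of_pos htpos]
    apply Real.exp_le_exp.2
    rcases le_or_gt t 1 with h1 | h1
    · have hlog : Real.log t ≤ 0 := Real.log_nonpos htpos.le h1
      have hlow : -(Q₀ * t) ≤ α t - 1 := neg_le_of_abs_le hmvt
      calc Real.log t * (α t - 1) ≤ Real.log t * (-(Q₀ * t)) :=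
            mul_le_mul_of_nonpos_left hlow hlog
        _ = Q₀ * (t * (-Real.log t)) := by ring
        _ ≤ Q₀ * 1 := by
            have hlog2 : Real.log (1 / t) ≤ 1 / t - 1 :=
              Real.log_le_sub_one_of_pos (by positivity)
            have : -Real.log t ≤ 1 / t - 1 := by
              rwa [Real.log_div one_ne_zero (ne_of_gt htpos), Real.log_one,
                zero_sub] at hlog2
            have h4 : t * (-Real.log t) ≤ t * (1 / t - 1) :=
              mul_le_mul_of_nonneg_left this htpos.le
            have h5 : t * (1 / t - 1) = 1 - t := by field_simp
            nlinarith
        _ = Q₀ := mul_one Q₀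
    · have hlog : 0 ≤ Real.log t := Real.log_nonneg h1.le
      have : α t - 1 ≤ 0 := by linarith [(hrange t htmem).2]
      nlinarith
  rw [abs_of_nonneg (by positivity)]
  exact div_le_div₀ (Real.exp_pos Q₀).le hpow hmpos hGlb
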